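/- For all integers t ≥ 1 and m ≥ 2, every simple graph on the vertex set of (T_{4t+2}; m) whose edge set contains every edge of (T_{4t+2}; m) has girth at most 4t+2. -/

import Mathlib

/-- `BT t` : bit strings of length at most `2t - 1` that do not have `0^t` as a prefix. -/
def BT (t : ℕ) : Type :=
  {l : List Bool // l.length ≤ 2 * t - 1 ∧ ¬ List.replicate t false <+: l}

/-- Vertex set of `(T_{4t+2}; m)` : the two pinned vertices `x* = Sum.inl true`,
`y* = Sum.inl false`, together with `{x, y} × B_t × ZMod m`, where the side `x` is
encoded by `true` and `y` by `false`. -/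
def TVert (t m : ℕ) : Type := Bool ⊕ (Bool × BT t × ZMod m)

/-- The edge relation of `(T_{4t+2}; m)`: the pinned vertex of each side is joined to the
root `(s, ε, i)` for every `i`; each vertex `(s, b, i)` is joined to its children
`(s, bc, i)`; and `(x, a, i)` is joined to `(y, a, i)` where `a = 0^{t-1}`. -/
def TRel (t m : ℕ) : TVert t m → TVert t m → Prop := fun a b =>
  (∃ (s : Bool) (l : BT t) (i : ZMod m),
      a = Sum.inl s ∧ b = Sum.inr (s, l, i) ∧ l.val = []) ∨
  (∃ (s : Bool) (l l' : BT t) (i : ZMod m) (c : Bool),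
      a = Sum.inr (s, l, i) ∧ b = Sum.inr (s, l', i) ∧ l'.val = l.val ++ [c]) ∨
  (∃ (l l' : BT t) (i : ZMod m),
      a = Sum.inr (true, l, i) ∧ b = Sum.inr (false, l', i) ∧
      l.val = List.replicate (t - 1) false ∧ l'.val = List.replicate (t - 1) false)

/-- The graph `(T_{4t+2}; m)`. -/
def Tgraph (t m : ℕ) : SimpleGraph (TVert t m) := SimpleGraph.fromRel (TRel t m)

namespace S10

def btl (t : ℕ) (ht : 1 ≤ t) (k : ℕ) : BT t :=
  ⟨List.replicate (min k (t - 1)) false, by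
    constructor
    · simp only [List.length_replicate]; omega
    · intro h
      have h1 := h.length_le
      simp only [List.length_replicate] at h1
      omega⟩

@[simp] lemma btl_val (t : ℕ) (ht : 1 ≤ t) (k : ℕ) : (btl t ht k).val = List.replicate (min k (t-1)) false := rfl

def vX (t m : ℕ) (ht : 1 ≤ t) (s : Bool) (k : ℕ) (i : ZMod m) : TVert t m := Sum.inr (s, btl t ht k, i)

def pin (t m : ℕ) (s : Bool) : TVert t m := Sum.inl s

@[simp] lemma pin_eq_iff (t m : ℕ) (s s' : Bool) : pin t m s = pin t m s' ↔ s = s' :=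
  ⟨fun h => Sum.inl.inj h, fun h => h ▸ rfl⟩

lemma vX_eq_iff (t m : ℕ) (ht : 1 ≤ t) (s s' : Bool) (k k' : ℕ) (i i' : ZMod m) :
    vX t m ht s k i = vX t m ht s' k' i' ↔ s = s' ∧ min k (t-1) = min k' (t-1) ∧ i = i' := by
  constructor
  · intro h
    unfold vX at h
    replace h := Sum.inr.inj h
    rw [Prod.mk.injEq, Prod.mk.injEq] at h
    refine ⟨h.1, ?_, h.2.2⟩
    have := congrArg Subtype.val h.2.1
    simpa [btl, List.replicate_left_inj] using this
  · rintro ⟨rfl, h2, rfl⟩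
    unfold vX btl
    simp [h2]
    rfl


variable {t m : ℕ} {H : SimpleGraph (TVert t m)}

lemma adjH (hle : Tgraph t m ≤ H) {a b : TVert t m} (hne : a ≠ b) (hr : TRel t m a b) :
    H.Adj a b := hle (by exact (SimpleGraph.fromRel_adj _ _ _).2 ⟨hne, Or.inl hr⟩)

lemma adj1 (ht : 1 ≤ t) (hle : Tgraph t m ≤ H) (s : Bool) (i : ZMod m) :
    H.Adj (pin t m s) (vX t m ht s 0 i) := by
  refine adjH hle (by exact Sum.inl_ne_inr) (Or.inl ⟨s, btl t ht 0, i, rfl, rfl, by simp⟩)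

lemma adj2 (ht : 1 ≤ t) (hle : Tgraph t m ≤ H) (s : Bool) (i : ZMod m) {k : ℕ}
    (hk : k + 1 ≤ t - 1) : H.Adj (vX t m ht s k i) (vX t m ht s (k+1) i) := by
  refine adjH hle ?_ (Or.inr (Or.inl ⟨s, btl t ht k, btl t ht (k+1), i, false, rfl, rfl, ?_⟩))
  · rw [Ne, vX_eq_iff]; omega
  · simp only [btl_val]
    rw [Nat.min_eq_left (by omega), Nat.min_eq_left (by omega), List.replicate_succ']

lemma adj3 (ht : 1 ≤ t) (hle : Tgraph t m ≤ H) (i : ZMod m) :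
    H.Adj (vX t m ht true (t-1) i) (vX t m ht false (t-1) i) := by
  refine adjH hle ?_ (Or.inr (Or.inr ⟨btl t ht (t-1), btl t ht (t-1), i, rfl, rfl, by simp, by simp⟩))
  rw [Ne, vX_eq_iff]; simp

def D (ht : 1 ≤ t) (hle : Tgraph t m ≤ H) (s : Bool) (i : ZMod m) :
    (k : ℕ) → k + 1 ≤ t → H.Walk (vX t m ht s 0 i) (vX t m ht s k i)
  | 0, _ => SimpleGraph.Walk.nil
  | (k+1), hk => (D ht hle s i k (by omega)).concat (adj2 ht hle s i (by omega))

@[simp] lemma length_D (ht : 1 ≤ t) (hle : Tgraph t m ≤ H) (s : Bool) (i : ZMod m)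
    (k : ℕ) (hk : k + 1 ≤ t) : (D ht hle s i k hk).length = k := by
  induction k with
  | zero => rfl
  | succ k ih => rw [D, SimpleGraph.Walk.length_concat, ih]

@[simp] lemma support_D (ht : 1 ≤ t) (hle : Tgraph t m ≤ H) (s : Bool) (i : ZMod m)
    (k : ℕ) (hk : k + 1 ≤ t) :
    (D ht hle s i k hk).support = (List.range (k+1)).map (fun j => vX t m ht s j i) := by
  induction k with
  | zero => rfl
  | succ k ih =>
    rw [D, SimpleGraph.Walk.support_concat, ih]
    simp [List.range_succ]


@[simp] lemma edges_D (ht : 1 ≤ t) (hle : Tgraph t m ≤ H) (s : Bool) (i : ZMod m)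
    (k : ℕ) (hk : k + 1 ≤ t) :
    (D ht hle s i k hk).edges
      = (List.range k).map (fun j => s(vX t m ht s j i, vX t m ht s (j+1) i)) := by
  induction k with
  | zero => rfl
  | succ k ih =>
    rw [D, SimpleGraph.Walk.edges_concat, ih]
    simp [List.range_succ]

@[simp] lemma inl_ne_vX (ht : 1 ≤ t) (s s' : Bool) (k : ℕ) (i : ZMod m) :
    pin t m s ≠ vX t m ht s' k i := by exact Sum.inl_ne_inr

@[simp] lemma vX_ne_inl (ht : 1 ≤ t) (s s' : Bool) (k : ℕ) (i : ZMod m) :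
    vX t m ht s' k i ≠ pin t m s := by exact Sum.inr_ne_inl

end S10

open S10 SimpleGraph Walk in
/-- for all integers `t ≥ 1` and `m ≥ 2`, every simple graph on the vertex
set of `(T_{4t+2}; m)` whose edge set contains every edge of `(T_{4t+2}; m)` has girth at
most `4t + 2`. -/
theorem statement10 (t m : ℕ) (ht : 1 ≤ t) (hm : 2 ≤ m)
    (H : SimpleGraph (TVert t m)) (hle : Tgraph t m ≤ H) :
    H.egirth ≤ ((4 * t + 2 : ℕ) : ℕ∞) := by
  have hp : (t - 1) + 1 ≤ t := by omega
  have hne01 : (0 : ZMod m) ≠ 1 := by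
    haveI : Fact (1 < m) := ⟨hm⟩
    exact zero_ne_one
  let P : H.Walk (vX t m ht true 0 0) (pin t m true) :=
    (D ht hle true 0 (t-1) hp).append <|
    .cons (adj3 ht hle 0) <|
    (D ht hle false 0 (t-1) hp).reverse.append <|
    .cons (adj1 ht hle false 0).symm <|
    .cons (adj1 ht hle false 1) <|
    (D ht hle false 1 (t-1) hp).append <|
    .cons (adj3 ht hle 1).symm <|
    (D ht hle true 1 (t-1) hp).reverse.append <|
    .cons (adj1 ht hle true 1).symm .nil
  let c : H.Walk (pin t m true) (pin t m true) := .cons (adj1 ht hle true 0) P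
  have hlen : c.length = 4 * t + 2 := by
    simp only [c, P, Walk.length_cons, Walk.length_append, Walk.length_reverse, Walk.length_nil, length_D]
    omega
  have hcyc : c.IsCycle := by
    rw [Walk.cons_isCycle_iff]
    constructor
    · rw [Walk.isPath_def]
      simp only [P, Walk.support_append, Walk.support_cons, Walk.support_reverse,
        Walk.support_nil, support_D, List.tail_cons, List.tail_append_of_ne_nil]
      have hseg : ∀ (s : Bool) (i : ZMod m),
          (List.map (fun j => vX t m ht s j i) (List.range (t-1+1))).Nodup := by
        intro s i
        refine List.Nodup.map_on ?_ List.nodup_range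
        intro x hx y hy hxy
        rw [vX_eq_iff] at hxy
        simp only [List.mem_range] at hx hy
        omega
      simp [List.nodup_append, List.nodup_cons, List.disjoint_left, List.mem_map,
        List.mem_range, vX_eq_iff, hne01, hseg, eq_comm]
      refine ⟨⟨⟨?_, ?_⟩, ?_⟩, ?_⟩
      · rintro a x hx rfl
        simp [vX_eq_iff, hne01, eq_comm]
      · rintro a x hx rfl b hb rfl
        simp [vX_eq_iff, hne01, eq_comm] at hb
      · rintro a x hx rfl
        refine ⟨by simp, ?_⟩
        rintro b hb rfl
        simp [vX_eq_iff, hne01, eq_comm] at hb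
      · rintro a x hx rfl b hb rfl
        simp [vX_eq_iff, hne01, eq_comm] at hb
    · intro hmem
      simp only [P, Walk.edges_append, Walk.edges_cons, Walk.edges_reverse, edges_D,
        Walk.edges_nil, List.mem_append, List.mem_reverse, List.mem_map, List.mem_cons,
        List.mem_range, List.not_mem_nil, or_false] at hmem
      simp [Sym2.eq_iff, vX_eq_iff, hne01, eq_comm] at hmem
  calc H.egirth ≤ (c.length : ℕ∞) := by
        rw [SimpleGraph.egirth]
        exact iInf_le_of_le _ (iInf_le_of_le c (iInf_le_of_le hcyc le_rfl))
    _ = ((4 * t + 2 : ℕ) : ℕ∞) := by rw [hlen]
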